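/- For every m ≥ 1 put n = 2m+1 and let B be the symmetric bilinear form on ℝⁿ determined by B(eᵢ, e_{2m−i}) = ((−1)ⁱ/2)·C(2m,i) for i = 0, …, 2m and B(eᵢ, eⱼ) = 0 whenever i + j ≠ 2m (its quadratic form is Σ_{j=0}^{m−1} (−1)ʲ·C(2m,j)·θⱼθ_{2m−j} + ((−1)ᵐ/2)·C(2m,m)·θₘ²). Then B is nondegenerate and, for each A ∈ {E₊, E₋, E₀}, one has B(Ax, y) + B(x, Ay) = 0 for all x, y ∈ ℝⁿ. -/

import Mathlib

open Matrix

/-- `E₊` of the `n`-dimensional irreducible representation of `sl(2,ℝ)`: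
`(E₊)_{i,i+1} = n−1−i`, other entries zero. -/
noncomputable def EplusN (n : ℕ) : Matrix (Fin n) (Fin n) ℝ :=
  Matrix.of fun i j => if (i : ℕ) + 1 = (j : ℕ) then (n : ℝ) - 1 - (i : ℕ) else 0

/-- `E₋`: `(E₋)_{i+1,i} = i+1`, other entries zero. -/
noncomputable def EminusN (n : ℕ) : Matrix (Fin n) (Fin n) ℝ :=
  Matrix.of fun i j => if (i : ℕ) = (j : ℕ) + 1 then ((i : ℕ) : ℝ) else 0

/-- `E₀ = diag(2i − (n−1))`. -/
noncomputable def EzeroN (n : ℕ) : Matrix (Fin n) (Fin n) ℝ :=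
  Matrix.of fun i j => if i = j then 2 * ((i : ℕ) : ℝ) - ((n : ℝ) - 1) else 0

/-- The symmetric bilinear form `B` on `ℝ^{2m+1}` with
`B(eᵢ, e_{2m−i}) = ((−1)ⁱ/2)·C(2m,i)` and `B(eᵢ,eⱼ) = 0` for `i+j ≠ 2m`. -/
noncomputable def Bmat (m : ℕ) : Matrix (Fin (2 * m + 1)) (Fin (2 * m + 1)) ℝ :=
  Matrix.of fun i j =>
    if (i : ℕ) + (j : ℕ) = 2 * m
      then ((-1 : ℝ) ^ (i : ℕ) / 2) * (Nat.choose (2 * m) (i : ℕ) : ℝ)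
      else 0

lemma sum_single_fin {n : ℕ} (f : Fin n → ℝ) (t : ℕ) (ht : t < n)
    (h : ∀ k : Fin n, (k : ℕ) ≠ t → f k = 0) :
    ∑ k, f k = f ⟨t, ht⟩ := by
  apply Finset.sum_eq_single
  · intro k _ hk
    exact h k (fun hc => hk (Fin.ext hc))
  · simp

lemma invariance {n : ℕ} (A B : Matrix (Fin n) (Fin n) ℝ)
    (h : Aᵀ * B + B * A = 0) (x y : Fin n → ℝ) :
    (A.mulVec x) ⬝ᵥ B.mulVec y + x ⬝ᵥ B.mulVec (A.mulVec y) = 0 := by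
  have h1 : A.mulVec x = x ᵥ* Aᵀ := (vecMul_transpose A x).symm
  simp only [h1, dotProduct_mulVec, vecMul_vecMul]
  rw [← add_dotProduct, ← vecMul_add, h]
  simp

lemma choose_cast_id (m b : ℕ) (hb : b < 2 * m) :
    ((2 * m).choose (b + 1) : ℝ) * ((b : ℝ) + 1)
      = ((2 * m).choose b : ℝ) * (2 * (m : ℝ) - b) := by
  have hc := Nat.choose_succ_right_eq (2 * m) b
  have h3 : ((2 * m).choose (b + 1) : ℝ) * ((b : ℝ) + 1)
      = (((2 * m).choose (b + 1) * (b + 1) : ℕ) : ℝ) := by push_cast; ring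
  rw [h3, hc]
  push_cast [Nat.cast_sub hb.le]
  ring

lemma key_plus (m : ℕ) :
    (EplusN (2 * m + 1))ᵀ * Bmat m + Bmat m * EplusN (2 * m + 1) = 0 := by
  ext i j
  simp only [Matrix.add_apply, Matrix.mul_apply, transpose_apply, EplusN, Bmat,
    Matrix.of_apply, Matrix.zero_apply]
  by_cases hij : (i : ℕ) + (j : ℕ) = 2 * m + 1
  · have hi1 : 1 ≤ (i : ℕ) := by have := j.isLt; omega
    obtain ⟨b, hb⟩ : ∃ b, (i : ℕ) = b + 1 := ⟨(i : ℕ) - 1, by omega⟩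
    have hb2m : b < 2 * m := by have := i.isLt; have := j.isLt; omega
    have e1 : ∑ k : Fin (2 * m + 1),
        (if (k : ℕ) + 1 = (i : ℕ) then (↑(2 * m + 1) : ℝ) - 1 - (k : ℕ) else 0) *
        (if (k : ℕ) + (j : ℕ) = 2 * m then (-1 : ℝ) ^ (k : ℕ) / 2 * ((2 * m).choose (k : ℕ) : ℝ) else 0)
        = ((↑(2 * m + 1) : ℝ) - 1 - b) * ((-1 : ℝ) ^ b / 2 * ((2 * m).choose b : ℝ)) := by
      rw [sum_single_fin _ b (by omega)]
      · simp only [Fin.val_mk]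
        rw [if_pos (by first | trivial | omega), if_pos (by first | trivial | omega)]
      · intro k hk
        rw [if_neg (show ¬((k : ℕ) + 1 = (i : ℕ)) by omega)]; ring
    have e2 : ∑ k : Fin (2 * m + 1),
        (if (i : ℕ) + (k : ℕ) = 2 * m then (-1 : ℝ) ^ (i : ℕ) / 2 * ((2 * m).choose (i : ℕ) : ℝ) else 0) *
        (if (k : ℕ) + 1 = (j : ℕ) then (↑(2 * m + 1) : ℝ) - 1 - (k : ℕ) else 0)
        = ((-1 : ℝ) ^ (i : ℕ) / 2 * ((2 * m).choose (i : ℕ) : ℝ)) *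
          ((↑(2 * m + 1) : ℝ) - 1 - (2 * m - b - 1 : ℕ)) := by
      rw [sum_single_fin _ (2 * m - b - 1) (by omega)]
      · simp only [Fin.val_mk]
        rw [if_pos (by first | trivial | omega), if_pos (by first | trivial | omega)]
      · intro k hk
        rw [if_neg (show ¬((i : ℕ) + (k : ℕ) = 2 * m) by omega)]; ring
    rw [e1, e2, hb]
    have hcr := choose_cast_id m b hb2m
    have hsub : ((2 * m - b - 1 : ℕ) : ℝ) = 2 * (m : ℝ) - b - 1 := by
      rw [Nat.cast_sub (by omega), Nat.cast_sub (by omega)]; push_cast; ring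
    rw [hsub]
    push_cast
    linear_combination (-((-1 : ℝ) ^ b) / 2) * hcr
  · have s1 : ∑ k : Fin (2 * m + 1),
        (if (k : ℕ) + 1 = (i : ℕ) then (↑(2 * m + 1) : ℝ) - 1 - (k : ℕ) else 0) *
        (if (k : ℕ) + (j : ℕ) = 2 * m then (-1 : ℝ) ^ (k : ℕ) / 2 * ((2 * m).choose (k : ℕ) : ℝ) else 0)
        = 0 :=
      Finset.sum_eq_zero fun k _ => by
        split_ifs with h1 h2 <;> first | (exfalso; omega) | ring
    have s2 : ∑ k : Fin (2 * m + 1),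
        (if (i : ℕ) + (k : ℕ) = 2 * m then (-1 : ℝ) ^ (i : ℕ) / 2 * ((2 * m).choose (i : ℕ) : ℝ) else 0) *
        (if (k : ℕ) + 1 = (j : ℕ) then (↑(2 * m + 1) : ℝ) - 1 - (k : ℕ) else 0)
        = 0 :=
      Finset.sum_eq_zero fun k _ => by
        split_ifs with h1 h2 <;> first | (exfalso; omega) | ring
    rw [s1, s2, add_zero]

lemma key_minus (m : ℕ) :
    (EminusN (2 * m + 1))ᵀ * Bmat m + Bmat m * EminusN (2 * m + 1) = 0 := by
  ext i j
  simp only [Matrix.add_apply, Matrix.mul_apply, transpose_apply, EminusN, Bmat,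
    Matrix.of_apply, Matrix.zero_apply]
  by_cases hij : (i : ℕ) + (j : ℕ) + 1 = 2 * m
  · have ha2m : (i : ℕ) < 2 * m := by omega
    have e1 : ∑ k : Fin (2 * m + 1),
        (if (k : ℕ) = (i : ℕ) + 1 then ((k : ℕ) : ℝ) else 0) *
        (if (k : ℕ) + (j : ℕ) = 2 * m then (-1 : ℝ) ^ (k : ℕ) / 2 * ((2 * m).choose (k : ℕ) : ℝ) else 0)
        = (((i : ℕ) : ℝ) + 1) * ((-1 : ℝ) ^ ((i : ℕ) + 1) / 2 * ((2 * m).choose ((i : ℕ) + 1) : ℝ)) := by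
      rw [sum_single_fin _ ((i : ℕ) + 1) (by omega)]
      · simp only [Fin.val_mk]
        rw [if_pos (by first | trivial | omega), if_pos (by first | trivial | omega)]
        push_cast; ring
      · intro k hk
        rw [if_neg (show ¬((k : ℕ) = (i : ℕ) + 1) by omega)]; ring
    have e2 : ∑ k : Fin (2 * m + 1),
        (if (i : ℕ) + (k : ℕ) = 2 * m then (-1 : ℝ) ^ (i : ℕ) / 2 * ((2 * m).choose (i : ℕ) : ℝ) else 0) *
        (if (k : ℕ) = (j : ℕ) + 1 then ((k : ℕ) : ℝ) else 0)
        = ((-1 : ℝ) ^ (i : ℕ) / 2 * ((2 * m).choose (i : ℕ) : ℝ)) * (2 * (m : ℝ) - (i : ℕ)) := by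
      rw [sum_single_fin _ (2 * m - (i : ℕ)) (by omega)]
      · simp only [Fin.val_mk]
        rw [if_pos (by first | trivial | omega), if_pos (by first | trivial | omega)]
        rw [Nat.cast_sub (by omega)]
        push_cast; ring
      · intro k hk
        rw [if_neg (show ¬((i : ℕ) + (k : ℕ) = 2 * m) by omega)]; ring
    rw [e1, e2]
    have hcr := choose_cast_id m (i : ℕ) ha2m
    linear_combination (-((-1 : ℝ) ^ ((i : ℕ))) / 2) * hcr
  · have s1 : ∑ k : Fin (2 * m + 1),
        (if (k : ℕ) = (i : ℕ) + 1 then ((k : ℕ) : ℝ) else 0) *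
        (if (k : ℕ) + (j : ℕ) = 2 * m then (-1 : ℝ) ^ (k : ℕ) / 2 * ((2 * m).choose (k : ℕ) : ℝ) else 0)
        = 0 :=
      Finset.sum_eq_zero fun k _ => by
        split_ifs with h1 h2 <;> first | (exfalso; omega) | ring
    have s2 : ∑ k : Fin (2 * m + 1),
        (if (i : ℕ) + (k : ℕ) = 2 * m then (-1 : ℝ) ^ (i : ℕ) / 2 * ((2 * m).choose (i : ℕ) : ℝ) else 0) *
        (if (k : ℕ) = (j : ℕ) + 1 then ((k : ℕ) : ℝ) else 0)
        = 0 :=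
      Finset.sum_eq_zero fun k _ => by
        split_ifs with h1 h2 <;> first | (exfalso; omega) | ring
    rw [s1, s2, add_zero]

lemma key_zero (m : ℕ) :
    (EzeroN (2 * m + 1))ᵀ * Bmat m + Bmat m * EzeroN (2 * m + 1) = 0 := by
  ext i j
  simp only [Matrix.add_apply, Matrix.mul_apply, transpose_apply, EzeroN, Bmat,
    Matrix.of_apply, Matrix.zero_apply]
  have e1 : ∑ k : Fin (2 * m + 1),
      (if k = i then 2 * ((k : ℕ) : ℝ) - ((↑(2 * m + 1) : ℝ) - 1) else 0) *
      (if (k : ℕ) + (j : ℕ) = 2 * m then (-1 : ℝ) ^ (k : ℕ) / 2 * ((2 * m).choose (k : ℕ) : ℝ) else 0)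
      = (2 * ((i : ℕ) : ℝ) - ((↑(2 * m + 1) : ℝ) - 1)) *
        (if (i : ℕ) + (j : ℕ) = 2 * m then (-1 : ℝ) ^ (i : ℕ) / 2 * ((2 * m).choose (i : ℕ) : ℝ) else 0) := by
    rw [sum_single_fin _ (i : ℕ) i.isLt]
    · simp [Fin.eta]
    · intro k hk
      rw [if_neg (show ¬(k = i) from fun hc => hk (congrArg Fin.val hc))]; ring
  have e2 : ∑ k : Fin (2 * m + 1),
      (if (i : ℕ) + (k : ℕ) = 2 * m then (-1 : ℝ) ^ (i : ℕ) / 2 * ((2 * m).choose (i : ℕ) : ℝ) else 0) *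
      (if k = j then 2 * ((k : ℕ) : ℝ) - ((↑(2 * m + 1) : ℝ) - 1) else 0)
      = (if (i : ℕ) + (j : ℕ) = 2 * m then (-1 : ℝ) ^ (i : ℕ) / 2 * ((2 * m).choose (i : ℕ) : ℝ) else 0) *
        (2 * ((j : ℕ) : ℝ) - ((↑(2 * m + 1) : ℝ) - 1)) := by
    rw [sum_single_fin _ (j : ℕ) j.isLt]
    · simp [Fin.eta]
    · intro k hk
      rw [if_neg (show ¬(k = j) from fun hc => hk (congrArg Fin.val hc))]; ring
  rw [e1, e2]
  by_cases hij : (i : ℕ) + (j : ℕ) = 2 * m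
  · rw [if_pos hij]
    have hr : ((i : ℕ) : ℝ) + ((j : ℕ) : ℝ) = 2 * m := by exact_mod_cast hij
    push_cast
    linear_combination ((-1 : ℝ) ^ ((i : ℕ)) * ((2 * m).choose ((i : ℕ)) : ℝ)) * hr
  · rw [if_neg hij]; ring

/-- In odd dimension `n = 2m+1`, the bilinear form `B` is nondegenerate and invariant
under the irreducible `sl(2,ℝ)`: `B(Ax,y) + B(x,Ay) = 0` for `A ∈ {E₊, E₋, E₀}`. -/
theorem stmt16 (m : ℕ) (hm : 1 ≤ m) :
    (∀ x : Fin (2 * m + 1) → ℝ,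
        (∀ y : Fin (2 * m + 1) → ℝ, x ⬝ᵥ (Bmat m).mulVec y = 0) → x = 0) ∧
    (∀ A ∈ ({EplusN (2 * m + 1), EminusN (2 * m + 1), EzeroN (2 * m + 1)} :
          Set (Matrix (Fin (2 * m + 1)) (Fin (2 * m + 1)) ℝ)),
      ∀ x y : Fin (2 * m + 1) → ℝ,
        (A.mulVec x) ⬝ᵥ (Bmat m).mulVec y + x ⬝ᵥ (Bmat m).mulVec (A.mulVec y) = 0) := by
  constructor
  · intro x hx
    funext i
    have hj : 2 * m - (i : ℕ) < 2 * m + 1 := by omega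
    have hy := hx (Pi.single ⟨2 * m - (i : ℕ), hj⟩ 1)
    rw [Matrix.mulVec_single] at hy
    have hval : ∑ k : Fin (2 * m + 1),
        x k * (Bmat m k ⟨2 * m - (i : ℕ), hj⟩ * 1)
        = x i * (((-1 : ℝ) ^ (i : ℕ) / 2) * ((2 * m).choose (i : ℕ) : ℝ)) := by
      rw [sum_single_fin _ (i : ℕ) i.isLt]
      · simp only [Bmat, Matrix.of_apply, Fin.val_mk, mul_one, Fin.eta]
        rw [if_pos (by have := i.isLt; omega)]
      · intro k hk
        simp only [Bmat, Matrix.of_apply, Fin.val_mk, mul_one]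
        rw [if_neg (by have := i.isLt; omega)]
        ring
    rw [show x ⬝ᵥ MulOpposite.op (1 : ℝ) • (Bmat m).col ⟨2 * m - (i : ℕ), hj⟩
        = ∑ k, x k * (Bmat m k ⟨2 * m - (i : ℕ), hj⟩ * 1) from rfl, hval] at hy
    have hne : ((-1 : ℝ) ^ (i : ℕ) / 2) * ((2 * m).choose (i : ℕ) : ℝ) ≠ 0 := by
      apply mul_ne_zero
      · exact div_ne_zero (pow_ne_zero _ (by norm_num)) two_ne_zero
      · exact_mod_cast (Nat.choose_pos (show (i : ℕ) ≤ 2 * m by have := i.isLt; omega)).ne'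
    have := mul_eq_zero.mp hy
    simp only [Pi.zero_apply]
    tauto
  · intro A hA x y
    rcases hA with h | h | h
    · rw [h]; exact invariance _ _ (key_plus m) x y
    · rw [h]; exact invariance _ _ (key_minus m) x y
    · rw [Set.mem_singleton_iff.mp h]; exact invariance _ _ (key_zero m) x y
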